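/- Let $R$ be a commutative ring with an exact sequence of finite free $R$-modules $0 \to P_1 \xrightarrow{f} P_2 \xrightarrow{g} P_3 \to 0$ where $P_i$ has rank $r_i$ (so $r_2 = r_1 + r_3$). Then the map $\bigwedge^{r_1} P_1 \otimes_R \bigwedge^{r_3} P_3 \to \bigwedge^{r_2} P_2$ given by $(x_1 \wedge \cdots \wedge x_{r_1}) \otimes (y_1 \wedge \cdots \wedge y_{r_3}) \mapsto f(x_1) \wedge \cdots \wedge f(x_{r_1}) \wedge \tilde{y}_1 \wedge \cdots \wedge \tilde{y}_{r_3}$, where $\tilde{y}_i$ is any lift of $y_i$ along $g$, is a well-defined isomorphism independent of the choice of lifts. -/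

import Mathlib

open TensorProduct ExteriorAlgebra

namespace Stmt11Aux

variable {R : Type*} [CommRing R] {M N : Type*} [AddCommGroup M] [Module R M]
  [AddCommGroup N] [Module R N]


theorem castAdd_ne_castAdd {p q : ℕ} {i j : Fin p} (h : i ≠ j) :
    Fin.castAdd q i ≠ Fin.castAdd q j :=
  fun hh => h (Fin.castAdd_inj.1 hh)

theorem natAdd_ne_natAdd {p q : ℕ} {i j : Fin q} (h : i ≠ j) :
    Fin.natAdd p i ≠ Fin.natAdd p j := by
  have h' : (i : ℕ) ≠ (j : ℕ) := fun hh => h (Fin.ext hh)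
  intro hh
  exact h' (by have := congrArg Fin.val hh; simpa using this)

theorem natAdd_ne_castAdd {p q : ℕ} (i : Fin q) (j : Fin p) :
    Fin.natAdd p i ≠ Fin.castAdd q j := by
  intro hh
  have := congrArg Fin.val hh
  have hj := j.isLt
  simp at this
  omega

theorem fin_append_update_left {α : Type*} {p q : ℕ} (u : Fin p → α) (z : Fin q → α)
    (i : Fin p) (w : α) :
    Fin.append (Function.update u i w) z
      = Function.update (Fin.append u z) (Fin.castAdd q i) w := by
  funext k
  refine Fin.addCases (fun j => ?_) (fun j => ?_) k
  · rcases eq_or_ne j i with rfl | hj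
    · simp [Fin.append_left]
    · rw [Function.update_of_ne (castAdd_ne_castAdd hj), Fin.append_left, Fin.append_left,
        Function.update_of_ne hj]
  · rw [Function.update_of_ne (natAdd_ne_castAdd j i), Fin.append_right, Fin.append_right]

theorem fin_append_update_right {α : Type*} {p q : ℕ} (u : Fin p → α) (z : Fin q → α)
    (j : Fin q) (w : α) :
    Fin.append u (Function.update z j w)
      = Function.update (Fin.append u z) (Fin.natAdd p j) w := by
  funext k
  refine Fin.addCases (fun i => ?_) (fun i => ?_) k
  · rw [Function.update_of_ne (natAdd_ne_castAdd j i).symm, Fin.append_left, Fin.append_left]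
  · rcases eq_or_ne i j with rfl | hi
    · simp [Fin.append_right]
    · rw [Function.update_of_ne (natAdd_ne_natAdd hi), Fin.append_right, Fin.append_right,
        Function.update_of_ne hi]

/-- Wedging a fixed left block with a varying right block, as an alternating map. -/
noncomputable def wedgeR {p q : ℕ} (u : Fin p → M) :
    M [⋀^Fin q]→ₗ[R] ExteriorAlgebra R M where
  toFun z := ιMulti R (p + q) (Fin.append u z)
  map_update_add' := by
    intro dec z j a b
    cases Subsingleton.elim dec (instDecidableEqFin q)
    rw [fin_append_update_right, fin_append_update_right, fin_append_update_right,
      (ιMulti R (p + q)).map_update_add]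
  map_update_smul' := by
    intro dec z j c a
    cases Subsingleton.elim dec (instDecidableEqFin q)
    rw [fin_append_update_right, fin_append_update_right, (ιMulti R (p + q)).map_update_smul]
  map_eq_zero_of_eq' := by
    intro z i j hij hne
    refine (ιMulti R (p + q)).map_eq_zero_of_eq _ (i := Fin.natAdd p i) (j := Fin.natAdd p j)
      (by rw [Fin.append_right, Fin.append_right, hij]) ?_
    exact natAdd_ne_natAdd hne

@[simp] theorem wedgeR_apply {p q : ℕ} (u : Fin p → M) (z : Fin q → M) :
    wedgeR (R := R) u z = ιMulti R (p + q) (Fin.append u z) := rfl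

/-- Wedging a varying left block with a fixed right block, as an alternating map. -/
noncomputable def wedgeL {p q : ℕ} (z : Fin q → M) :
    M [⋀^Fin p]→ₗ[R] ExteriorAlgebra R M where
  toFun u := ιMulti R (p + q) (Fin.append u z)
  map_update_add' := by
    intro dec u i a b
    cases Subsingleton.elim dec (instDecidableEqFin p)
    rw [fin_append_update_left, fin_append_update_left, fin_append_update_left,
      (ιMulti R (p + q)).map_update_add]
  map_update_smul' := by
    intro dec u i c a
    cases Subsingleton.elim dec (instDecidableEqFin p)
    rw [fin_append_update_left, fin_append_update_left, (ιMulti R (p + q)).map_update_smul]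
  map_eq_zero_of_eq' := by
    intro u i j hij hne
    refine (ιMulti R (p + q)).map_eq_zero_of_eq _ (i := Fin.castAdd q i) (j := Fin.castAdd q j)
      (by rw [Fin.append_left, Fin.append_left, hij]) ?_
    exact castAdd_ne_castAdd hne

@[simp] theorem wedgeL_apply {p q : ℕ} (z : Fin q → M) (u : Fin p → M) :
    wedgeL (R := R) z u = ιMulti R (p + q) (Fin.append u z) := rfl

/-- Any alternating map in `n` variables on a module with a basis of cardinality `n`
is determined by the determinant. -/
theorem alt_eq_det_smul {n : ℕ} (b : Module.Basis (Fin n) R M) (F : M [⋀^Fin n]→ₗ[R] N)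
    (v : Fin n → M) : F v = b.det v • F ⇑b := by
  have h : F = (b.det).smulRight (F ⇑b) := by
    refine Module.Basis.ext_alternating b fun i hi => ?_
    let σ : Equiv.Perm (Fin n) := Equiv.ofBijective i (Finite.injective_iff_bijective.1 hi)
    have : (fun j => b (i j)) = ⇑b ∘ σ := rfl
    rw [this, F.map_perm, AlternatingMap.smulRight_apply, b.det.map_perm, Module.Basis.det_self]
    simp [Units.smul_def, Int.cast_smul_eq_zsmul]
  conv_lhs => rw [h]
  simp

theorem ιMulti_mem {n : ℕ} (v : Fin n → M) : ιMulti R n v ∈ ⋀[R]^n M :=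
  ιMulti_range R n (Set.mem_range_self v)

/-- Linear form on the top exterior power given by the determinant. -/
noncomputable def powD {n : ℕ} (b : Module.Basis (Fin n) R M) : (⋀[R]^n M) →ₗ[R] R :=
  (ExteriorAlgebra.liftAlternating
    (fun i => if h : n = i then (h ▸ b.det) else 0)).comp (⋀[R]^n M).subtype

theorem powD_apply {n : ℕ} (b : Module.Basis (Fin n) R M) (v : Fin n → M)
    (hv : ιMulti R n v ∈ ⋀[R]^n M) : powD b ⟨ιMulti R n v, hv⟩ = b.det v := by
  simp [powD, ExteriorAlgebra.liftAlternating_apply_ιMulti]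

/-- The top exterior power of a free module of rank `n` is free of rank one. -/
noncomputable def powEquiv {n : ℕ} (b : Module.Basis (Fin n) R M) : (⋀[R]^n M) ≃ₗ[R] R := by
  refine LinearEquiv.ofLinear (powD b)
    (LinearMap.toSpanSingleton R _ (⟨ιMulti R n ⇑b, ιMulti_mem ⇑b⟩ : ⋀[R]^n M)) ?_ ?_
  · refine LinearMap.ext_ring ?_
    simp [LinearMap.toSpanSingleton_apply, powD_apply, Module.Basis.det_self]
  · have hle : (⋀[R]^n M) ≤ Submodule.span R {ιMulti R n ⇑b} := by
      rw [← ExteriorAlgebra.ιMulti_span_fixedDegree]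
      refine Submodule.span_le.2 ?_
      rintro _ ⟨v, rfl⟩
      rw [alt_eq_det_smul b (ιMulti R n) v]
      exact Submodule.smul_mem _ _ (Submodule.mem_span_singleton_self _)
    refine LinearMap.ext fun w => ?_
    obtain ⟨r, hr⟩ := Submodule.mem_span_singleton.1 (hle w.2)
    have hw : w = r • (⟨ιMulti R n ⇑b, ιMulti_mem ⇑b⟩ : ⋀[R]^n M) :=
      Subtype.ext (by simp [← hr])
    rw [hw]
    simp only [LinearMap.comp_apply, LinearMap.id_apply, map_smul, powD_apply, Module.Basis.det_self]
    simp [LinearMap.toSpanSingleton_apply]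

theorem powEquiv_apply {n : ℕ} (b : Module.Basis (Fin n) R M) (v : Fin n → M)
    (hv : ιMulti R n v ∈ ⋀[R]^n M) : powEquiv b ⟨ιMulti R n v, hv⟩ = b.det v :=
  powD_apply b v hv

theorem powEquiv_symm_apply {n : ℕ} (b : Module.Basis (Fin n) R M) (r : R) :
    (powEquiv b).symm r = r • (⟨ιMulti R n ⇑b, ιMulti_mem ⇑b⟩ : ⋀[R]^n M) := by
  simp [powEquiv, LinearMap.toSpanSingleton_apply]

theorem append_comp_blockPerm {α : Type*} {p q : ℕ} (u : Fin p → α) (w : Fin q → α)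
    (σ : Equiv.Perm (Fin q)) :
    (Fin.append u w) ∘ ⇑(Equiv.permCongr finSumFinEquiv ((Equiv.refl (Fin p)).sumCongr σ))
      = Fin.append u (w ∘ σ) := by
  funext k
  refine Fin.addCases (fun i => ?_) (fun j => ?_) k <;>
    simp [Equiv.permCongr_apply, finSumFinEquiv_symm_apply_castAdd,
      finSumFinEquiv_symm_apply_natAdd, finSumFinEquiv_apply_left, finSumFinEquiv_apply_right,
      Fin.append_left, Fin.append_right]

end Stmt11Aux

open Stmt11Aux

/-- Determinant isomorphism for a short exact sequence `0 → P₁ → P₂ → P₃ → 0` of finite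
free modules of ranks `r₁, r₁+r₃, r₃` over a commutative ring `R`: there is an
isomorphism `⋀^{r₁} P₁ ⊗ ⋀^{r₃} P₃ ≅ ⋀^{r₁+r₃} P₂` sending
`(x₁∧⋯∧x_{r₁}) ⊗ (y₁∧⋯∧y_{r₃})` to `f(x₁)∧⋯∧f(x_{r₁})∧ỹ₁∧⋯∧ỹ_{r₃}` for *any* choice of
lifts `ỹᵢ` of the `yᵢ` along `g` (so the map is well defined, independent of the lifts). -/
theorem stmt_11 (R : Type*) [CommRing R]
    (P₁ P₂ P₃ : Type*) [AddCommGroup P₁] [Module R P₁] [AddCommGroup P₂] [Module R P₂]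
    [AddCommGroup P₃] [Module R P₃]
    [Module.Free R P₁] [Module.Finite R P₁] [Module.Free R P₂] [Module.Finite R P₂]
    [Module.Free R P₃] [Module.Finite R P₃] (r₁ r₃ : ℕ)
    (h₁ : Module.finrank R P₁ = r₁) (h₃ : Module.finrank R P₃ = r₃)
    (h₂ : Module.finrank R P₂ = r₁ + r₃)
    (f : P₁ →ₗ[R] P₂) (g : P₂ →ₗ[R] P₃)
    (hf : Function.Injective f) (hg : Function.Surjective g)
    (hfg : LinearMap.range f = LinearMap.ker g) :
    ∃ Φ : ((⋀[R]^r₁ P₁) ⊗[R] (⋀[R]^r₃ P₃)) ≃ₗ[R] ⋀[R]^(r₁ + r₃) P₂,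
      ∀ (x : Fin r₁ → P₁) (y : Fin r₃ → P₃) (ylift : Fin r₃ → P₂),
        (∀ i, g (ylift i) = y i) →
        ∀ (u : ⋀[R]^r₁ P₁) (v : ⋀[R]^r₃ P₃) (w : ⋀[R]^(r₁ + r₃) P₂),
          (u : ExteriorAlgebra R P₁) = ExteriorAlgebra.ιMulti R r₁ x →
          (v : ExteriorAlgebra R P₃) = ExteriorAlgebra.ιMulti R r₃ y →
          (w : ExteriorAlgebra R P₂)
            = ExteriorAlgebra.ιMulti R (r₁ + r₃) (Fin.append (f ∘ x) ylift) →
          Φ (u ⊗ₜ[R] v) = w := by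
  classical
  rcases subsingleton_or_nontrivial R with hR | hR
  · have : Subsingleton (((⋀[R]^r₁ P₁) ⊗[R] (⋀[R]^r₃ P₃))) := Module.subsingleton R _
    have : Subsingleton (⋀[R]^(r₁ + r₃) P₂) := Module.subsingleton R _
    refine ⟨LinearEquiv.ofLinear 0 0 (Subsingleton.elim _ _) (Subsingleton.elim _ _), ?_⟩
    intros
    exact Subsingleton.elim _ _
  obtain ⟨s, hs⟩ := Module.projective_lifting_property g LinearMap.id hg
  have hgs : ∀ p, g (s p) = p := fun p => LinearMap.congr_fun hs p
  have hgf : ∀ a, g (f a) = 0 := fun a => by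
    have : f a ∈ LinearMap.ker g := hfg ▸ LinearMap.mem_range_self f a
    exact this
  let b₁ : Module.Basis (Fin r₁) R P₁ := (Module.finBasis R P₁).reindex (finCongr h₁)
  let b₃ : Module.Basis (Fin r₃) R P₃ := (Module.finBasis R P₃).reindex (finCongr h₃)
  have hinj : Function.Injective ⇑(f.coprod s) := by
    rw [← LinearMap.ker_eq_bot]
    refine (Submodule.eq_bot_iff _).2 ?_
    rintro ⟨a, p⟩ h
    simp only [LinearMap.mem_ker, LinearMap.coprod_apply] at h
    have hp : p = 0 := by
      have := congrArg g h
      simpa [map_add, hgf, hgs] using this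
    subst hp
    have ha : a = 0 := hf (by simpa using h)
    simp [ha]
  have hsurj : Function.Surjective ⇑(f.coprod s) := by
    intro z
    have hz : z - s (g z) ∈ LinearMap.ker g := by simp [map_sub, hgs]
    rw [← hfg] at hz
    obtain ⟨a, ha⟩ := hz
    exact ⟨(a, g z), by simp [LinearMap.coprod_apply, ha]⟩
  let e : (P₁ × P₃) ≃ₗ[R] P₂ := LinearEquiv.ofBijective (f.coprod s) ⟨hinj, hsurj⟩
  let b₂ : Module.Basis (Fin (r₁ + r₃)) R P₂ := ((b₁.prod b₃).map e).reindex finSumFinEquiv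
  have hb₂ : ⇑b₂ = Fin.append (⇑f ∘ ⇑b₁) (⇑s ∘ ⇑b₃) := by
    funext k
    refine Fin.addCases (fun i => ?_) (fun j => ?_) k
    · simp [b₂, Module.Basis.reindex_apply, finSumFinEquiv_symm_apply_castAdd, Module.Basis.map_apply,
        Module.Basis.prod_apply, e, LinearEquiv.ofBijective_apply, LinearMap.coprod_apply,
        Fin.append_left]
      show f.coprod s (b₁ i, 0) = _
      simp
    · simp [b₂, Module.Basis.reindex_apply, finSumFinEquiv_symm_apply_natAdd, Module.Basis.map_apply,
        Module.Basis.prod_apply, e, LinearEquiv.ofBijective_apply, LinearMap.coprod_apply,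
        Fin.append_right]
      show f.coprod s (0, b₃ j) = _
      simp
  -- Stage (ii): wedging `f ∘ b₁` with an arbitrary right block
  have hT : ∀ z : Fin r₃ → P₂,
      ιMulti R (r₁ + r₃) (Fin.append (⇑f ∘ ⇑b₁) z)
        = b₃.det (⇑g ∘ z) • ιMulti R (r₁ + r₃) (Fin.append (⇑f ∘ ⇑b₁) (⇑s ∘ ⇑b₃)) := by
    have key : (wedgeR (R := R) (⇑f ∘ ⇑b₁) : P₂ [⋀^Fin r₃]→ₗ[R] ExteriorAlgebra R P₂)
        = (b₃.det.compLinearMap g).smulRight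
            (ιMulti R (r₁ + r₃) (Fin.append (⇑f ∘ ⇑b₁) (⇑s ∘ ⇑b₃))) := by
      refine Module.Basis.ext_alternating b₂ fun v hv => ?_
      by_cases hall : ∀ i, r₁ ≤ ((v i) : ℕ)
      · let v' : Fin r₃ → Fin r₃ := fun j =>
          ⟨(v j : ℕ) - r₁, by have := (v j).isLt; have := j.pos; omega⟩
        have hv' : Function.Injective v' := by
          intro a b hab
          apply hv
          have ha := hall a; have hb := hall b
          have hval : ((v a : ℕ) - r₁) = ((v b : ℕ) - r₁) := congrArg Fin.val hab
          exact Fin.ext (by omega)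
        let σ : Equiv.Perm (Fin r₃) :=
          Equiv.ofBijective v' (Finite.injective_iff_bijective.1 hv')
        have hbv : ∀ j, b₂ (v j) = s (b₃ (σ j)) := by
          intro j
          have hval : ((Fin.natAdd r₁ (v' j)) : ℕ) = r₁ + ((v j : ℕ) - r₁) := rfl
          have hj : v j = Fin.natAdd r₁ (v' j) :=
            Fin.ext (by rw [hval]; have := hall j; omega)
          have h1 : b₂ (v j) = b₂ (Fin.natAdd r₁ (v' j)) := congrArg _ hj
          rw [h1, hb₂, Fin.append_right]
          rfl
        have hL : (fun j => b₂ (v j)) = (⇑s ∘ ⇑b₃) ∘ ⇑σ := funext fun j => hbv j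
        have hgb : (fun j => g (b₂ (v j))) = ⇑b₃ ∘ ⇑σ := by
          funext j; rw [hbv j]; simp [hgs]
        rw [AlternatingMap.smulRight_apply, AlternatingMap.compLinearMap_apply]
        rw [wedgeR_apply]
        rw [show (fun i => b₂ (v i)) = (⇑s ∘ ⇑b₃) ∘ ⇑σ from hL]
        rw [show (fun i => g (b₂ (v i))) = ⇑b₃ ∘ ⇑σ from hgb]
        rw [← append_comp_blockPerm (⇑f ∘ ⇑b₁) (⇑s ∘ ⇑b₃) σ]
        rw [AlternatingMap.map_perm, b₃.det.map_perm, Module.Basis.det_self]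
        rw [Equiv.Perm.sign_permCongr, Equiv.Perm.sign_sumCongr]
        simp [Units.smul_def, Int.cast_smul_eq_zsmul]
      · push_neg at hall
        obtain ⟨i, hi⟩ := hall
        have hbt : b₂ (v i) = f (b₁ ⟨(v i : ℕ), hi⟩) := by
          have hvi : v i = Fin.castAdd r₃ ⟨(v i : ℕ), hi⟩ := Fin.ext rfl
          have h1 : b₂ (v i) = b₂ (Fin.castAdd r₃ ⟨(v i : ℕ), hi⟩) := congrArg _ hvi
          rw [h1, hb₂, Fin.append_left]
          rfl
        rw [AlternatingMap.smulRight_apply, AlternatingMap.compLinearMap_apply]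
        rw [wedgeR_apply]
        have hL : (ιMulti R (r₁ + r₃))
            (Fin.append (⇑f ∘ ⇑b₁) fun i => b₂ (v i)) = 0 := by
          refine (ιMulti R (r₁ + r₃)).map_eq_zero_of_eq _
            (i := Fin.castAdd r₃ ⟨(v i : ℕ), hi⟩) (j := Fin.natAdd r₁ i) ?_
            ((natAdd_ne_castAdd i ⟨(v i : ℕ), hi⟩).symm)
          rw [Fin.append_left, Fin.append_right, hbt]
          rfl
        have hR : b₃.det (fun j => g (b₂ (v j))) = 0 := by
          refine AlternatingMap.map_coord_zero _ i ?_
          rw [hbt, hgf]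
        rw [hL, hR, zero_smul]
    intro z
    have hz := DFunLike.congr_fun key z
    simpa [Function.comp_def] using hz
  -- Stage (i) + combination
  have hC : ∀ (x : Fin r₁ → P₁) (z : Fin r₃ → P₂),
      ιMulti R (r₁ + r₃) (Fin.append (⇑f ∘ x) z)
        = (b₁.det x * b₃.det (⇑g ∘ z)) •
            ιMulti R (r₁ + r₃) (Fin.append (⇑f ∘ ⇑b₁) (⇑s ∘ ⇑b₃)) := by
    intro x z
    calc ιMulti R (r₁ + r₃) (Fin.append (⇑f ∘ x) z)
        = ((wedgeL (R := R) z).compLinearMap f) x := rfl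
      _ = b₁.det x • ((wedgeL (R := R) z).compLinearMap f) ⇑b₁ := alt_eq_det_smul b₁ _ x
      _ = b₁.det x • ιMulti R (r₁ + r₃) (Fin.append (⇑f ∘ ⇑b₁) z) := rfl
      _ = (b₁.det x * b₃.det (⇑g ∘ z)) •
            ιMulti R (r₁ + r₃) (Fin.append (⇑f ∘ ⇑b₁) (⇑s ∘ ⇑b₃)) := by
          rw [hT z, smul_smul]
  refine ⟨(TensorProduct.congr (powEquiv b₁) (powEquiv b₃)).trans
    ((TensorProduct.lid R R).trans (powEquiv b₂).symm), ?_⟩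
  intro x y ylift hy u v w hu hv hw
  have hu' : u = ⟨ιMulti R r₁ x, ιMulti_mem x⟩ := Subtype.ext hu
  have hv' : v = ⟨ιMulti R r₃ y, ιMulti_mem y⟩ := Subtype.ext hv
  rw [hu', hv']
  rw [LinearEquiv.trans_apply, TensorProduct.congr_tmul, powEquiv_apply, powEquiv_apply,
    LinearEquiv.trans_apply, TensorProduct.lid_tmul, smul_eq_mul, powEquiv_symm_apply]
  refine Subtype.ext ?_
  rw [Submodule.coe_smul, hw]
  have hgy : ⇑g ∘ ylift = y := funext hy
  have : (⇑f ∘ x) = (f ∘ x) := rfl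
  rw [hC x ylift, hgy, hb₂]
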